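/- Let A be a semiprime TC-algebra (an associative topological algebra A with commuting continuous locally nilpotent derivations ∂₁,…,∂ₙ such that A = {a(f) : a ∈ F(A), f ∈ H} and A has no nonzero nilpotent ∂ᵢ-invariant ideals). If J ⊆ F(A) is an H-submodule closed under all operations (· ₍f₎ ·) with J ₍f₎ J = 0 for all f ∈ H (J is an abelian ideal of the conformal structure), and J ≠ 0, then the k-span of {a(f) : a ∈ J, f ∈ H} is a nonzero ideal I of A with I² = 0 — contradiction; hence F(A) has no nonzero abelian conformal ideal. -/

import Mathlib

open MvPolynomial

/-- The topology on `H = k[T₁,…,Tₙ]` given by the powers of the augmentation ideal. -/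
noncomputable def Htop (k : Type*) [Field k] (n : ℕ) :
    TopologicalSpace (MvPolynomial (Fin n) k) :=
  (RingHom.ker (constantCoeff : MvPolynomial (Fin n) k →+* k)).adicTopology

/-- The antipode `S` of the Hopf algebra `H = k[T₁,…,Tₙ]`: `S(Tᵢ) = −Tᵢ`. -/
noncomputable def antipodeH (k : Type*) [Field k] (n : ℕ) :
    MvPolynomial (Fin n) k →ₐ[k] MvPolynomial (Fin n) k :=
  aeval fun i => -X i

/-- The coproduct `Δ(f) = f₍₁₎ ⊗ f₍₂₎` of `H = k[T₁,…,Tₙ]` (`Δ(Tᵢ) = Tᵢ⊗1 + 1⊗Tᵢ`),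
realised concretely: `k[T] ⊗ k[T] ≅ k[T ⊕ T] ≅ (k[T])[T]`, so `Δ(f)` is recorded as a
polynomial in the first group of variables whose coefficients (the second Sweedler
factors) lie in `H`. -/
noncomputable def sweedler {k : Type*} [Field k] {n : ℕ}
    (f : MvPolynomial (Fin n) k) :
    MvPolynomial (Fin n) (MvPolynomial (Fin n) k) :=
  sumAlgEquiv k (Fin n) (Fin n)
    ((aeval fun i => X (Sum.inl i) + X (Sum.inr i)) f)

/-- The conformal product `(a ₍f₎ b)(g) = Σ a(f₍₁₎) · b(S(f₍₂₎)·g)` on linear maps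
`H → A`, using the Sweedler decomposition `Δf = Σ f₍₁₎ ⊗ f₍₂₎`. -/
noncomputable def confProd {k : Type*} [Field k] {n : ℕ} {A : Type*}
    [Ring A] [Algebra k A]
    (a b : MvPolynomial (Fin n) k →ₗ[k] A) (f : MvPolynomial (Fin n) k) :
    MvPolynomial (Fin n) k →ₗ[k] A :=
  ∑ m ∈ (sweedler f).support,
    (LinearMap.mulLeft k (a (monomial m 1))) ∘ₗ b ∘ₗ
      (LinearMap.mulLeft k (antipodeH k n (coeff m (sweedler f))))

/-- The action of the variable `Tᵢ` on linear maps `H → A`: `(Tᵢ·a)(f) = −a(∂f/∂Tᵢ)`. -/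
noncomputable def Tact {k : Type*} [Field k] {n : ℕ} {A : Type*}
    [AddCommGroup A] [Module k A] (i : Fin n)
    (a : MvPolynomial (Fin n) k →ₗ[k] A) : MvPolynomial (Fin n) k →ₗ[k] A :=
  -(a ∘ₗ (pderiv i).toLinearMap)


section AuxLemmas

variable {k : Type*} [Field k] {n : ℕ}

/-- explicit form of the coproduct -/
noncomputable def sw {k : Type*} [Field k] {n : ℕ} (f : MvPolynomial (Fin n) k) :
    MvPolynomial (Fin n) (MvPolynomial (Fin n) k) :=
  aeval (fun i => (X i + C (X i) : MvPolynomial (Fin n) (MvPolynomial (Fin n) k))) f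

lemma sweedler_eq (f : MvPolynomial (Fin n) k) : sweedler f = sw f := by
  have h : ((sumAlgEquiv k (Fin n) (Fin n)).toAlgHom.comp
      (aeval fun i => X (Sum.inl i) + X (Sum.inr i)) :
      MvPolynomial (Fin n) k →ₐ[k] MvPolynomial (Fin n) (MvPolynomial (Fin n) k))
      = aeval (fun i => (X i + C (X i) : MvPolynomial (Fin n) (MvPolynomial (Fin n) k))) := by
    apply MvPolynomial.algHom_ext
    intro i
    simp [sumAlgEquiv_X_inl, sumAlgEquiv_X_inr]
  have h2 := DFunLike.congr_fun h f
  simpa [sweedler, sw] using h2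

/-- degree of a multi-exponent -/
def mdeg {n : ℕ} (d : Fin n →₀ ℕ) : ℕ := ∑ i, d i

lemma mdeg_strict {d m : Fin n →₀ ℕ} (h : m ≤ d) (hne : m ≠ d) : mdeg m < mdeg d := by
  obtain ⟨i, hi⟩ : ∃ i, m i ≠ d i := by
    by_contra hc
    push_neg at hc
    exact hne (Finsupp.ext hc)
  exact Finset.sum_lt_sum (fun i _ => h i) ⟨i, Finset.mem_univ i, lt_of_le_of_ne (h i) hi⟩

lemma sweedler_monomial_aux (N : ℕ) : ∀ d : Fin n →₀ ℕ, mdeg d = N →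
    (coeff d (sw (monomial d (1:k))) = 1 ∧
      ∀ m, ¬ m ≤ d → coeff m (sw (monomial d (1:k))) = 0) := by
  induction N using Nat.strong_induction_on with
  | _ N IH =>
    intro d hd
    by_cases hd0 : d = 0
    · subst hd0
      have h1 : (monomial (0 : Fin n →₀ ℕ) (1:k)) = 1 := by
        simp [monomial_zero']
      rw [h1, sw, map_one]
      constructor
      · simp [coeff_one]
      · intro m hm
        have : m ≠ 0 := by rintro rfl; exact hm le_rfl
        simp [coeff_one, Ne.symm this]
    · obtain ⟨i, hi⟩ : ∃ i, d i ≠ 0 := by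
        by_contra hc
        push_neg at hc
        exact hd0 (Finsupp.ext hc)
      set d' : Fin n →₀ ℕ := d - Finsupp.single i 1 with hd'
      have hle : Finsupp.single i 1 ≤ d := Finsupp.single_le_iff.mpr (Nat.one_le_iff_ne_zero.mpr hi)
      have hdd : Finsupp.single i 1 + d' = d := by
        rw [hd']
        exact add_tsub_cancel_of_le hle
      have hd'i : d' i = d i - 1 := by
        simp [hd', Finsupp.tsub_apply]
      have hd'le : d' ≤ d := by rw [hd']; exact tsub_le_self
      have hdegd' : mdeg d' < N := by
        have : mdeg d' < mdeg d := mdeg_strict hd'le (by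
          intro h
          have := congrArg (fun f : Fin n →₀ ℕ => f i) h
          simp only [hd'i] at this
          omega)
        omega
      have IH' := IH (mdeg d') hdegd' d' rfl
      have hsplit : (monomial d (1:k)) = monomial d' 1 * X i := by
        rw [← hdd, monomial_single_add, pow_one]
        ring
      have hq : sw (monomial d (1:k))
          = sw (monomial d' (1:k)) * (X i + C (X i)) := by
        rw [sw, sw, hsplit, map_mul, aeval_X]
      set q := sw (monomial d' (1:k)) with hqdef
      have coeff_form : ∀ m : Fin n →₀ ℕ, coeff m (sw (monomial d (1:k)))
          = (if i ∈ m.support then coeff (m - Finsupp.single i 1) q else 0) + coeff m q * X i := by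
        intro m
        rw [hq, mul_add, coeff_add, coeff_mul_X', mul_comm q (C (X i)), coeff_C_mul, mul_comm]
      constructor
      · rw [coeff_form d]
        have hmem : i ∈ d.support := Finsupp.mem_support_iff.mpr hi
        rw [if_pos hmem, ← hd']
        have h2 : coeff d q = 0 := IH'.2 d (by
          intro hled
          have := hled i
          rw [hd'i] at this
          omega)
        rw [IH'.1, h2]
        simp
      · intro m hm
        rw [coeff_form m]
        have h2 : coeff m q = 0 := IH'.2 m (fun hc => hm (hc.trans hd'le))
        rw [h2]
        by_cases hmi : i ∈ m.support
        · rw [if_pos hmi]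
          have hmle : Finsupp.single i 1 ≤ m := Finsupp.single_le_iff.mpr
            (Nat.one_le_iff_ne_zero.mpr (Finsupp.mem_support_iff.mp hmi))
          have : ¬ (m - Finsupp.single i 1 ≤ d') := by
            intro hc
            apply hm
            calc m = (m - Finsupp.single i 1) + Finsupp.single i 1 :=
                  (tsub_add_cancel_of_le hmle).symm
              _ ≤ d' + Finsupp.single i 1 := add_le_add_left hc _
              _ = d := by rw [add_comm]; exact hdd
          rw [IH'.2 _ this]
          simp
        · rw [if_neg hmi]
          simp

lemma sweedler_monomial_coeff_self (d : Fin n →₀ ℕ) :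
    coeff d (sweedler (monomial d (1:k))) = 1 := by
  rw [sweedler_eq]
  exact (sweedler_monomial_aux (mdeg d) d rfl).1

lemma sweedler_monomial_support_le {d m : Fin n →₀ ℕ}
    (hm : m ∈ (sweedler (monomial d (1:k))).support) : m ≤ d := by
  by_contra hc
  rw [sweedler_eq] at hm
  exact (mem_support_iff.mp hm) ((sweedler_monomial_aux (mdeg d) d rfl).2 m hc)

lemma confProd_apply {A : Type*} [Ring A] [Algebra k A]
    (a b : MvPolynomial (Fin n) k →ₗ[k] A) (f g : MvPolynomial (Fin n) k) :
    confProd a b f g = ∑ m ∈ (sweedler f).support,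
      a (monomial m 1) * b (antipodeH k n (coeff m (sweedler f)) * g) := by
  simp [confProd, LinearMap.sum_apply, LinearMap.comp_apply, LinearMap.mulLeft_apply]

lemma key_monomials {A : Type*} [Ring A] [Algebra k A]
    (a b : MvPolynomial (Fin n) k →ₗ[k] A) (P : AddSubgroup A)
    (hP : ∀ f g, confProd a b f g ∈ P) :
    ∀ (N : ℕ) (d : Fin n →₀ ℕ), mdeg d = N → ∀ g, a (monomial d 1) * b g ∈ P := by
  intro N
  induction N using Nat.strong_induction_on with
  | _ N IH =>
    intro d hd g
    have h1 : coeff d (sweedler (monomial d (1:k))) = 1 := sweedler_monomial_coeff_self d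
    have hds : d ∈ (sweedler (monomial d (1:k))).support :=
      mem_support_iff.mpr (by rw [h1]; exact one_ne_zero)
    have hsum := Finset.add_sum_erase _ (fun m => a (monomial m 1) *
      b (antipodeH k n (coeff m (sweedler (monomial d (1:k)))) * g)) hds
    have hFd : a (monomial d (1:k)) * b (antipodeH k n (coeff d (sweedler (monomial d (1:k)))) * g)
        = a (monomial d (1:k)) * b g := by
      rw [h1, map_one (antipodeH k n), one_mul]
    have hdecomp : a (monomial d (1:k)) * b g =
        (∑ m ∈ (sweedler (monomial d (1:k))).support, a (monomial m 1) *
          b (antipodeH k n (coeff m (sweedler (monomial d (1:k)))) * g)) -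
        ∑ m ∈ (sweedler (monomial d (1:k))).support.erase d, a (monomial m 1) *
          b (antipodeH k n (coeff m (sweedler (monomial d (1:k)))) * g) :=
      eq_sub_of_add_eq (by rw [← hFd]; exact hsum)
    rw [hdecomp, ← confProd_apply]
    refine sub_mem (hP _ _) (AddSubgroup.sum_mem P fun m hm => ?_)
    obtain ⟨hmne, hmmem⟩ := Finset.mem_erase.mp hm
    have hmle : m ≤ d := sweedler_monomial_support_le hmmem
    have : mdeg m < N := hd ▸ mdeg_strict hmle hmne
    exact IH (mdeg m) this m rfl _

lemma key {A : Type*} [Ring A] [Algebra k A]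
    (a b : MvPolynomial (Fin n) k →ₗ[k] A) (P : AddSubgroup A)
    (hP : ∀ f g, confProd a b f g ∈ P) (f g : MvPolynomial (Fin n) k) :
    a f * b g ∈ P := by
  have hf : a f = ∑ v ∈ f.support, a (monomial v (coeff v f)) := by
    conv_lhs => rw [f.as_sum]
    rw [map_sum]
  rw [hf, Finset.sum_mul]
  refine AddSubgroup.sum_mem P fun v _ => ?_
  have hmv : monomial v (coeff v f) = (coeff v f) • monomial v (1:k) := by
    rw [smul_monomial, smul_eq_mul, mul_one]
  rw [hmv, map_smul, smul_mul_assoc, ← mul_smul_comm, ← map_smul]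
  exact key_monomials a b P hP (mdeg v) v rfl _

end AuxLemmas

/-- Let `A` be a semiprime TC-algebra (a topological algebra with commuting continuous
locally nilpotent derivations `∂ᵢ`, every element of which has the form `a(f)` with
`a ∈ F(A)` continuous translation-invariant, and with no nonzero `∂`-invariant ideal
of square zero).  Then the conformal algebra `F(A)` has no nonzero abelian conformal
ideal: any `H`-submodule `J ⊆ F(A)` which is an ideal for the conformal products and
satisfies `J ₍f₎ J = 0` for all `f` is zero. -/
theorem semiprime_no_abelian_conformal_ideal (k : Type*) [Field k] [CharZero k] (n : ℕ)
    (A : Type*) [Ring A] [Algebra k A] [TopologicalSpace A] [IsTopologicalRing A]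
    (D : Fin n → A → A)
    (hDcont : ∀ i, Continuous (D i))
    (hDadd : ∀ i x y, D i (x + y) = D i x + D i y)
    (hDleib : ∀ i x y, D i (x * y) = D i x * y + x * D i y)
    (hDcomm : ∀ i j, D i ∘ D j = D j ∘ D i)
    (hDnilp : ∀ i x, ∃ N : ℕ, (D i)^[N] x = 0)
    -- `A = A(F(A))`: every element of `A` is a value of some continuous
    -- translation-invariant map
    (htc : ∀ x : A, ∃ a : MvPolynomial (Fin n) k →ₗ[k] A,
      (@Continuous _ _ (Htop k n) _ a ∧
        ∀ (i : Fin n) (f : MvPolynomial (Fin n) k), a (pderiv i f) = D i (a f)) ∧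
      ∃ f, a f = x)
    -- `A` is semiprime: no nonzero nilpotent `∂`-invariant (two-sided) ideals
    (hsp : ∀ I : TwoSidedIdeal A, (∀ (i : Fin n), ∀ x ∈ I, D i x ∈ I) →
      (∀ x ∈ I, ∀ y ∈ I, x * y = 0) → ∀ x ∈ I, x = 0)
    -- `J` is an abelian conformal ideal of `F(A)`:
    (J : Set (MvPolynomial (Fin n) k →ₗ[k] A))
    (hJF : ∀ a ∈ J, @Continuous _ _ (Htop k n) _ a ∧
      ∀ (i : Fin n) (f : MvPolynomial (Fin n) k), a (pderiv i f) = D i (a f))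
    (hJadd : ∀ a ∈ J, ∀ b ∈ J, a + b ∈ J)
    (hJsmul : ∀ (c : k), ∀ a ∈ J, c • a ∈ J)
    (hJT : ∀ a ∈ J, ∀ i : Fin n, Tact i a ∈ J)
    (hJideal : ∀ a : MvPolynomial (Fin n) k →ₗ[k] A,
      (@Continuous _ _ (Htop k n) _ a ∧
        ∀ (i : Fin n) (f : MvPolynomial (Fin n) k), a (pderiv i f) = D i (a f)) →
      ∀ b ∈ J, ∀ f : MvPolynomial (Fin n) k, confProd a b f ∈ J ∧ confProd b a f ∈ J)
    (hJab : ∀ a ∈ J, ∀ b ∈ J, ∀ f : MvPolynomial (Fin n) k, confProd a b f = 0) :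
    ∀ a ∈ J, a = 0 := by
  classical
  set gens : Set A := {x | ∃ c ∈ J, ∃ h, c h = x} with hgens
  set G : AddSubgroup A := AddSubgroup.closure gens with hG
  have hgen_mem : ∀ c ∈ J, ∀ h, c h ∈ G := fun c hc h =>
    AddSubgroup.subset_closure ⟨c, hc, h, rfl⟩
  have hD0 : ∀ i, D i 0 = 0 := by
    intro i
    have h := hDadd i 0 0
    rw [add_zero] at h
    exact right_eq_add.mp h
  have hDneg : ∀ i (x : A), D i (-x) = - D i x := by
    intro i x
    have h := hDadd i x (-x)
    rw [add_neg_cancel, hD0 i] at h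
    exact eq_neg_of_add_eq_zero_right h.symm
  have hmull : ∀ (x : A), ∀ y ∈ G, x * y ∈ G := by
    intro x y hy
    refine AddSubgroup.closure_induction ?_ ?_ ?_ ?_ hy
    · rintro y ⟨c, hc, h, rfl⟩
      obtain ⟨a, haF, f0, haf⟩ := htc x
      rw [← haf]
      exact key a c G (fun f g => hgen_mem _ (hJideal a haF c hc f).1 g) f0 h
    · rw [mul_zero]; exact zero_mem G
    · intro u v _ _ hu hv; rw [mul_add]; exact add_mem hu hv
    · intro u _ hu; rw [mul_neg]; exact neg_mem hu
  have hmulr : ∀ (x : A), ∀ y ∈ G, y * x ∈ G := by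
    intro x y hy
    refine AddSubgroup.closure_induction ?_ ?_ ?_ ?_ hy
    · rintro y ⟨c, hc, h, rfl⟩
      obtain ⟨a, haF, f0, haf⟩ := htc x
      rw [← haf]
      exact key c a G (fun f g => hgen_mem _ (hJideal a haF c hc f).2 g) h f0
    · rw [zero_mul]; exact zero_mem G
    · intro u v _ _ hu hv; rw [add_mul]; exact add_mem hu hv
    · intro u _ hu; rw [neg_mul]; exact neg_mem hu
  have hDinv : ∀ (i : Fin n), ∀ x ∈ G, D i x ∈ G := by
    intro i x hx
    refine AddSubgroup.closure_induction ?_ ?_ ?_ ?_ hx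
    · rintro x ⟨c, hc, h, rfl⟩
      rw [← (hJF c hc).2 i h]
      exact hgen_mem c hc _
    · rw [hD0 i]; exact zero_mem G
    · intro u v _ _ hu hv; rw [hDadd]; exact add_mem hu hv
    · intro u _ hu; rw [hDneg]; exact neg_mem hu
  have hsq : ∀ x ∈ G, ∀ y ∈ G, x * y = 0 := by
    intro x hx
    refine AddSubgroup.closure_induction ?_ ?_ ?_ ?_ hx
    · rintro x ⟨b, hb, f, rfl⟩ y hy
      refine AddSubgroup.closure_induction ?_ ?_ ?_ ?_ hy
      · rintro y ⟨c, hc, g, rfl⟩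
        have h0 : ∀ f' g', confProd b c f' g' ∈ (⊥ : AddSubgroup A) := by
          intro f' g'
          rw [hJab b hb c hc f']
          simp
        simpa using key b c ⊥ h0 f g
      · rw [mul_zero]
      · intro u v _ _ hu hv; rw [mul_add, hu, hv, add_zero]
      · intro u _ hu; rw [mul_neg, hu, neg_zero]
    · intro y _; rw [zero_mul]
    · intro u v _ _ hu hv y hy; rw [add_mul, hu y hy, hv y hy, add_zero]
    · intro u _ hu y hy; rw [neg_mul, hu y hy, neg_zero]
  let I : TwoSidedIdeal A := TwoSidedIdeal.mk' G
    (zero_mem G) (fun hx hy => add_mem hx hy) (fun hx => neg_mem hx)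
    (fun {x y} hy => hmull x y hy) (fun {x y} hx => hmulr y x hx)
  have hmemI : ∀ x : A, x ∈ I ↔ x ∈ G := fun x => TwoSidedIdeal.mem_mk' _ _ _ _ _ _ x
  have hzero := hsp I
    (fun i x hx => (hmemI _).2 (hDinv i x ((hmemI _).1 hx)))
    (fun x hx y hy => hsq x ((hmemI x).1 hx) y ((hmemI y).1 hy))
  intro a ha
  apply LinearMap.ext
  intro f
  rw [LinearMap.zero_apply]
  exact hzero (a f) ((hmemI _).2 (hgen_mem a ha f))
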